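/- Let p ≠ 2 and let E/K : y² = f(x) be an elliptic curve with f ∈ K[x] a monic squarefree cubic with roots r₁, r₂, r₃ ∈ K̄. Then: (i) whether the roots are equidistant, i.e. v(r₁ − r₂) = v(r₁ − r₃) = v(r₂ − r₃), does not depend on the choice of model of E of the form y₁² = f₁(x₁) with f₁ a monic cubic (any two such models are related by x₁ = u²x + s, y₁ = u³y with u ∈ K^×, s ∈ K); and (ii) E has potentially good reduction if and only if the roots of f are equidistant. -/

import Mathlib

open Polynomial Pointwise
open scoped Classical

set_option synthInstance.maxHeartbeats 1000000
set_option maxHeartbeats 1000000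

section VLemmas
variable {Ω : Type} [Field Ω] (v : Ω → ℚ)
variable (hv_mul : ∀ x y : Ω, x ≠ 0 → y ≠ 0 → v (x * y) = v x + v y)
variable (hv_add : ∀ x y : Ω, x ≠ 0 → y ≠ 0 → x + y ≠ 0 → min (v x) (v y) ≤ v (x + y))

include hv_mul

lemma v_one' : v 1 = 0 := by
  have := hv_mul 1 1 one_ne_zero one_ne_zero
  simpa using this.symm

lemma v_neg' (x : Ω) (hx : x ≠ 0) : v (-x) = v x := by
  have hm1 : v (-1 : Ω) = 0 := by
    have := hv_mul (-1) (-1) (by norm_num) (by norm_num)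
    have h1 := v_one' v hv_mul
    simp only [neg_mul, one_mul, neg_neg] at this
    rw [h1] at this; linarith
  have := hv_mul (-1) x (by norm_num) hx
  rw [hm1] at this
  simpa using this

lemma v_inv' (x : Ω) (hx : x ≠ 0) : v x⁻¹ = - v x := by
  have := hv_mul x x⁻¹ hx (inv_ne_zero hx)
  rw [mul_inv_cancel₀ hx, v_one' v hv_mul] at this
  linarith

lemma v_pow' (x : Ω) (hx : x ≠ 0) (n : ℕ) : v (x ^ n) = n * v x := by
  induction n with
  | zero => simpa using v_one' v hv_mul
  | succ n ih =>
    rw [pow_succ, hv_mul _ _ (pow_ne_zero n hx) hx, ih]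
    push_cast; ring

include hv_add

lemma v_add_eq_left' (x y : Ω) (hx : x ≠ 0) (hy : y ≠ 0) (hlt : v x < v y) :
    x + y ≠ 0 ∧ v (x + y) = v x := by
  have hne : x + y ≠ 0 := by
    intro h
    have hxy : x = -y := by linear_combination h
    rw [hxy, v_neg' v hv_mul y hy] at hlt
    exact lt_irrefl _ hlt
  refine ⟨hne, le_antisymm ?_ ?_⟩
  · have h2 := hv_add (x + y) (-y) hne (neg_ne_zero.2 hy) (by simpa using hx)
    rw [add_neg_cancel_right, v_neg' v hv_mul y hy] at h2
    rcases le_total (v (x+y)) (v y) with h | h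
    · simpa [min_eq_left h] using h2
    · exfalso
      rw [min_eq_right h] at h2
      exact absurd (lt_of_lt_of_le hlt h2) (lt_irrefl _)
  · have := hv_add x y hx hy hne
    simpa [min_eq_left (le_of_lt hlt)] using this

/-- If `x + y` is nonzero then its valuation is at least `c`. -/
lemma v_addP' (c : ℚ) (x y : Ω) (hx : x ≠ 0 → c ≤ v x) (hy : y ≠ 0 → c ≤ v y) :
    x + y ≠ 0 → c ≤ v (x + y) := by
  intro hne
  by_cases hx0 : x = 0
  · subst hx0; rw [zero_add] at hne ⊢; exact hy hne
  by_cases hy0 : y = 0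
  · subst hy0; simpa using hx (by simpa using hne)
  calc c = min c c := (min_self c).symm
    _ ≤ min (v x) (v y) := min_le_min (hx hx0) (hy hy0)
    _ ≤ v (x + y) := hv_add x y hx0 hy0 hne

omit hv_add in
lemma v_mulP' (c d : ℚ) (x y : Ω) (hx : x ≠ 0 → c ≤ v x) (hy : y ≠ 0 → d ≤ v y) :
    x * y ≠ 0 → c + d ≤ v (x * y) := by
  intro hne
  have hx0 : x ≠ 0 := left_ne_zero_of_mul hne
  have hy0 : y ≠ 0 := right_ne_zero_of_mul hne
  rw [hv_mul x y hx0 hy0]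
  exact add_le_add (hx hx0) (hy hy0)

/-- Integrality of nonzero roots of monic cubics with integral coefficients. -/
lemma v_root_cubic' (B2 B4 B6 s : Ω)
    (h2 : B2 ≠ 0 → 0 ≤ v B2) (h4 : B4 ≠ 0 → 0 ≤ v B4) (h6 : B6 ≠ 0 → 0 ≤ v B6)
    (hs : s ≠ 0) (heq : s ^ 3 + B2 * s ^ 2 + B4 * s + B6 = 0) : 0 ≤ v s := by
  by_contra hneg
  push_neg at hneg
  have hvs3 : v (s ^ 3) = 3 * v s := v_pow' v hv_mul s hs 3
  have hkey : B2 * s ^ 2 + B4 * s + B6 ≠ 0 → 2 * v s ≤ v (B2 * s ^ 2 + B4 * s + B6) := by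
    apply v_addP' v hv_mul hv_add
    · apply v_addP' v hv_mul hv_add
      · intro h
        have := v_mulP' v hv_mul (0 : ℚ) (2 * v s) B2 (s ^ 2) h2
          (fun _ => le_of_eq (v_pow' v hv_mul s hs 2).symm) h
        linarith
      · intro h
        have := v_mulP' v hv_mul (0 : ℚ) (v s) B4 s h4 (fun _ => le_refl _) h
        linarith
    · intro h
      have := h6 h
      linarith
  have hsum : B2 * s ^ 2 + B4 * s + B6 = -(s ^ 3) := by linear_combination heq
  have hne : B2 * s ^ 2 + B4 * s + B6 ≠ 0 := by
    rw [hsum]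
    exact neg_ne_zero.2 (pow_ne_zero 3 hs)
  have := hkey hne
  rw [hsum, v_neg' v hv_mul _ (pow_ne_zero 3 hs), hvs3] at this
  linarith

end VLemmas

lemma exists_pow_root_two' {p : ℕ} [Fact (Nat.Prime p)] (hp2 : p ≠ 2) (n : ℕ) (hn : ¬ p ∣ n) :
    ∃ y : ℚ_[p], y ^ n = (2 : ℚ_[p]) ^ (p - 1) := by
  have hprime := (Fact.out : Nat.Prime p)
  set x : ℤ_[p] := 2 ^ (p - 1) with hx
  set F : ℤ_[p][X] := X ^ n - C x with hF
  have heval : F.eval 1 = 1 - x := by simp [hF]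
  have hdvd : (p : ℤ) ∣ 1 - 2 ^ (p - 1) := by
    have h2 : (2 : ZMod p) ≠ 0 := by
      intro h
      have h2' : ((2 : ℕ) : ZMod p) = 0 := by exact_mod_cast h
      rw [ZMod.natCast_eq_zero_iff] at h2'
      exact hp2 ((Nat.prime_dvd_prime_iff_eq hprime Nat.prime_two).1 h2')
    have := ZMod.pow_card_sub_one_eq_one h2
    have : ((1 - 2 ^ (p - 1) : ℤ) : ZMod p) = 0 := by push_cast [this]; ring
    exact (ZMod.intCast_zmod_eq_zero_iff_dvd _ p).1 this
  have hnorm1 : ‖F.eval 1‖ < 1 := by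
    rw [heval]
    have : (1 : ℤ_[p]) - x = ((1 - 2 ^ (p - 1) : ℤ) : ℤ_[p]) := by push_cast [hx]; ring
    rw [this]
    exact (PadicInt.norm_int_lt_one_iff_dvd _).2 hdvd
  have hderiv : F.derivative.eval 1 = (n : ℤ_[p]) := by
    simp [hF, Polynomial.derivative_X_pow]
  have hnormd : ‖F.derivative.eval 1‖ = 1 := by
    rw [hderiv]
    refine le_antisymm (PadicInt.norm_le_one _) ?_
    by_contra hlt
    push_neg at hlt
    have : ‖((n : ℤ) : ℤ_[p])‖ < 1 := by push_cast; exact hlt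
    rw [PadicInt.norm_int_lt_one_iff_dvd] at this
    exact hn (by exact_mod_cast this)
  have hhyp : ‖F.eval 1‖ < ‖F.derivative.eval 1‖ ^ 2 := by
    rw [hnormd]; simpa using hnorm1
  obtain ⟨z, hz, -⟩ := hensels_lemma hhyp
  have hzn : z ^ n = x := by
    have h0 : z ^ n - x = 0 := by simpa [hF] using hz
    exact sub_eq_zero.1 h0
  exact ⟨(z : ℚ_[p]), by
    have := congrArg (fun t : ℤ_[p] => (t : ℚ_[p])) hzn
    push_cast at this
    have h2c : ((2:ℤ_[p]) : ℚ_[p]) = 2 := by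
      rw [← one_add_one_eq_two, PadicInt.coe_add, PadicInt.coe_one, one_add_one_eq_two]
    simpa [hx, h2c] using this⟩

lemma v_two_zero'
    (p : ℕ) [Fact (Nat.Prime p)] (hp2 : p ≠ 2)
    (K : Type) [Field K] [Algebra ℚ_[p] K]
    (Ω : Type) [Field Ω] [Algebra K Ω]
    (v : Ω → ℚ)
    (hv_mul : ∀ x y : Ω, x ≠ 0 → y ≠ 0 → v (x * y) = v x + v y)
    (hv_add : ∀ x y : Ω, x ≠ 0 → y ≠ 0 → x + y ≠ 0 → min (v x) (v y) ≤ v (x + y))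
    (hv_int : ∀ x : K, x ≠ 0 → ∃ n : ℤ, v (algebraMap K Ω x) = (n : ℚ)) :
    v ((2 : Ω)) = 0 := by
  have hexroot : ∀ n : ℕ, ¬ p ∣ n → ∃ y : ℚ_[p], y ^ n = (2 : ℚ_[p]) ^ (p - 1) :=
    fun n hn => exists_pow_root_two' hp2 n hn
  have hprime := (Fact.out : Nat.Prime p)
  haveI : CharZero K := charZero_of_injective_algebraMap (algebraMap ℚ_[p] K).injective
  haveI : CharZero Ω := charZero_of_injective_algebraMap (algebraMap K Ω).injective
  have h2K : ((2 : K)) ≠ 0 := two_ne_zero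
  have h2Ω : ((2 : Ω)) ≠ 0 := two_ne_zero
  have halg2 : algebraMap K Ω (2 : K) = (2 : Ω) := map_ofNat _ 2
  obtain ⟨n, hn⟩ := hv_int (2 : K) h2K
  rw [halg2] at hn
  have hone : v (1 : Ω) = 0 := v_one' v hv_mul
  have hge : 0 ≤ v (2 : Ω) := by
    have h11 : (2 : Ω) = 1 + 1 := by norm_num
    have := hv_add 1 1 one_ne_zero one_ne_zero (by rw [← h11]; exact h2Ω)
    rw [hone] at this
    rw [h11]; simpa using this
  have hn0 : 0 ≤ n := by exact_mod_cast hn ▸ hge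
  rcases eq_or_lt_of_le hn0 with h | hpos
  · rw [hn, ← h]; norm_num
  exfalso
  obtain ⟨q, hqge, hq⟩ := Nat.exists_infinite_primes (max (p + 1) ((p - 1) * n.toNat + 1))
  have hqp : ¬ p ∣ q := by
    intro h
    have := (Nat.prime_dvd_prime_iff_eq hprime hq).1 h
    have hlt : p + 1 ≤ q := le_trans (le_max_left _ _) hqge
    omega
  obtain ⟨y, hy⟩ := hexroot q hqp
  have hy0 : y ≠ 0 := by
    intro h
    rw [h] at hy
    have h2p : ((2:ℚ_[p])) ^ (p - 1) ≠ 0 := pow_ne_zero _ two_ne_zero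
    have hq0 : (0:ℚ_[p]) ^ q = 0 := zero_pow hq.ne_zero
    rw [hq0] at hy
    exact h2p hy.symm
  set yK : K := algebraMap ℚ_[p] K y with hyK
  have hyK0 : yK ≠ 0 := by
    rw [hyK]
    exact (map_ne_zero_iff _ (algebraMap ℚ_[p] K).injective).2 hy0
  obtain ⟨m, hm⟩ := hv_int yK hyK0
  set Y : Ω := algebraMap K Ω yK with hY
  have hY0 : Y ≠ 0 := by
    rw [hY]
    exact (map_ne_zero_iff _ (algebraMap K Ω).injective).2 hyK0
  have hYq : Y ^ q = (2 : Ω) ^ (p - 1) := by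
    have h1 := congrArg (algebraMap ℚ_[p] K) hy
    rw [map_pow, map_pow] at h1
    have h2 := congrArg (algebraMap K Ω) h1
    rw [map_pow, map_pow] at h2
    simpa [hY, hyK, map_ofNat] using h2
  have h1 : (q:ℚ) * v Y = ((p:ℚ) - 1) * v (2:Ω) := by
    have hq1 := congrArg v hYq
    rw [v_pow' v hv_mul Y hY0 q, v_pow' v hv_mul (2:Ω) h2Ω (p-1)] at hq1
    rw [hq1]
    have hc : ((p - 1 : ℕ) : ℚ) = (p:ℚ) - 1 := by
      have h1p : 1 ≤ p := hprime.one_lt.le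
      push_cast [Nat.cast_sub h1p]
      ring
    rw [hc]
  rw [hm, hn] at h1
  have hZ : (q:ℤ) * m = ((p:ℤ) - 1) * n := by
    have hc : ((p:ℚ) - 1) = (((p:ℤ) - 1 : ℤ) : ℚ) := by push_cast; ring
    rw [hc] at h1
    exact_mod_cast h1
  have hp3 : 3 ≤ p := by
    have := hprime.two_le
    omega
  have hqbig : ((p:ℤ) - 1) * n < q := by
    have h1' : (p - 1) * n.toNat + 1 ≤ q := le_trans (le_max_right _ _) hqge
    have hc : ((p - 1 : ℕ) : ℤ) = (p:ℤ) - 1 := by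
      have h1p : 1 ≤ p := hprime.one_lt.le
      push_cast [Nat.cast_sub h1p]; ring
    have hnt : (n.toNat : ℤ) = n := Int.toNat_of_nonneg hn0
    calc ((p:ℤ) - 1) * n = ((p - 1 : ℕ) : ℤ) * (n.toNat : ℤ) := by rw [hc, hnt]
      _ < q := by exact_mod_cast Nat.lt_of_lt_of_le (Nat.lt_succ_self _) h1'
  have hqpos : 0 < ((p:ℤ) - 1) * n := by
    apply mul_pos
    · omega
    · exact hpos
  have hq0 : (0:ℤ) < (q:ℤ) := by exact_mod_cast hq.pos
  have hm1 : 1 ≤ m := by nlinarith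
  nlinarith

/-- The three points `a, b, c` are equidistant for the valuation `v`. -/
def Equid {Ω : Type} [Field Ω] (v : Ω → ℚ) (a b c : Ω) : Prop :=
  v (a - b) = v (a - c) ∧ v (a - c) = v (b - c)

/-- Let `p ≠ 2` and `E/K : y² = f(x)` an elliptic curve, `f` a monic
squarefree cubic with roots `r₁, r₂, r₃` in the algebraic closure.  Then
(i) equidistance of the roots is independent of the chosen model `y₁² = f₁(x₁)`
(any two such being related by `x₁ = u²x + s`, `y₁ = u³y` with `u ∈ Kˣ`, `s ∈ K`,
which replaces the roots `rᵢ` by `u²rᵢ + s`); and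
(ii) `E` has potentially good reduction — i.e. over some finite extension `M/K` inside
the algebraic closure there is a Weierstrass model of `E` with integral coefficients and
unit discriminant — if and only if the roots of `f` are equidistant. -/
theorem statement18
    (p : ℕ) [Fact (Nat.Prime p)] (hp2 : p ≠ 2)
    (K : Type) [Field K] [Algebra ℚ_[p] K] [FiniteDimensional ℚ_[p] K]
    (Ω : Type) [Field Ω] [Algebra K Ω] [IsAlgClosure K Ω]
    (v : Ω → ℚ)
    (hv_mul : ∀ x y : Ω, x ≠ 0 → y ≠ 0 → v (x * y) = v x + v y)
    (hv_add : ∀ x y : Ω, x ≠ 0 → y ≠ 0 → x + y ≠ 0 → min (v x) (v y) ≤ v (x + y))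
    (hv_int : ∀ x : K, x ≠ 0 → ∃ n : ℤ, v (algebraMap K Ω x) = (n : ℚ))
    (hv_one : ∃ x : K, x ≠ 0 ∧ v (algebraMap K Ω x) = 1)
    (f : Polynomial K) (hmonic : f.Monic) (hsf : Squarefree f) (hdeg : f.natDegree = 3)
    (r₁ r₂ r₃ : Ω)
    (hroots : f.map (algebraMap K Ω) =
      (Polynomial.X - Polynomial.C r₁) *
        ((Polynomial.X - Polynomial.C r₂) * (Polynomial.X - Polynomial.C r₃)))
    (EW : WeierstrassCurve K)
    (hEW : EW = { a₁ := 0, a₂ := f.coeff 2, a₃ := 0, a₄ := f.coeff 1, a₆ := f.coeff 0 }) :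
    (∀ u s : K, u ≠ 0 →
      (Equid v r₁ r₂ r₃ ↔
        Equid v ((algebraMap K Ω u) ^ 2 * r₁ + algebraMap K Ω s)
          ((algebraMap K Ω u) ^ 2 * r₂ + algebraMap K Ω s)
          ((algebraMap K Ω u) ^ 2 * r₃ + algebraMap K Ω s))) ∧
      ((∃ M : IntermediateField K Ω, FiniteDimensional K ↥M ∧
          ∃ Cv : WeierstrassCurve.VariableChange ↥M,
            (0 ≤ v (((Cv • (EW.baseChange ↥M)).a₁ : Ω)) ∧
              0 ≤ v (((Cv • (EW.baseChange ↥M)).a₂ : Ω)) ∧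
              0 ≤ v (((Cv • (EW.baseChange ↥M)).a₃ : Ω)) ∧
              0 ≤ v (((Cv • (EW.baseChange ↥M)).a₄ : Ω)) ∧
              0 ≤ v (((Cv • (EW.baseChange ↥M)).a₆ : Ω))) ∧
            v (((Cv • (EW.baseChange ↥M)).Δ : Ω)) = 0) ↔
        Equid v r₁ r₂ r₃) := by
  haveI : CharZero K := charZero_of_injective_algebraMap (algebraMap ℚ_[p] K).injective
  haveI : CharZero Ω := charZero_of_injective_algebraMap (algebraMap K Ω).injective
  haveI : IsAlgClosed Ω := IsAlgClosure.isAlgClosed K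
  set φ := algebraMap K Ω with hφ
  -- distinctness of roots
  have hsep : (f.map φ).Separable := by
    have : f.Separable := PerfectField.separable_iff_squarefree.2 hsf
    exact this.map
  have hdist : r₁ ≠ r₂ ∧ r₁ ≠ r₃ ∧ r₂ ≠ r₃ := by
    have hsq := hsep.squarefree
    refine ⟨?_, ?_, ?_⟩ <;> intro h
    · exact not_isUnit_X_sub_C r₁ (hsq (X - C r₁)
        ⟨X - C r₃, by rw [hroots, h]; ring⟩)
    · exact not_isUnit_X_sub_C r₁ (hsq (X - C r₁)
        ⟨X - C r₂, by rw [hroots, h]; ring⟩)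
    · exact not_isUnit_X_sub_C r₂ (hsq (X - C r₂)
        ⟨X - C r₁, by rw [hroots, h]; ring⟩)
  obtain ⟨hne12, hne13, hne23⟩ := hdist
  have hd12 : r₁ - r₂ ≠ 0 := sub_ne_zero.2 hne12
  have hd13 : r₁ - r₃ ≠ 0 := sub_ne_zero.2 hne13
  have hd23 : r₂ - r₃ ≠ 0 := sub_ne_zero.2 hne23
  -- coefficients of f in terms of the roots
  have hexp : (X - C r₁) * ((X - C r₂) * (X - C r₃)) =
      X ^ 3 + C (-(r₁ + r₂ + r₃)) * X ^ 2 + C (r₁ * r₂ + r₁ * r₃ + r₂ * r₃) * X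
        + C (-(r₁ * r₂ * r₃)) := by
    simp only [map_neg, map_add, map_mul]
    ring
  have hcoeff : ∀ k : ℕ, φ (f.coeff k) = ((X : Polynomial Ω) ^ 3 + C (-(r₁ + r₂ + r₃)) * X ^ 2
      + C (r₁ * r₂ + r₁ * r₃ + r₂ * r₃) * X + C (-(r₁ * r₂ * r₃))).coeff k := by
    intro k
    rw [← hexp, ← hroots, Polynomial.coeff_map]
  have hc2 : φ (f.coeff 2) = -(r₁ + r₂ + r₃) := by
    rw [hcoeff 2]
    simp only [coeff_add, coeff_C_mul, coeff_X_pow, coeff_C, coeff_X]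
    norm_num
  have hc1 : φ (f.coeff 1) = r₁ * r₂ + r₁ * r₃ + r₂ * r₃ := by
    rw [hcoeff 1]
    simp only [coeff_add, coeff_C_mul, coeff_X_pow, coeff_C, coeff_X]
    norm_num
  have hc0 : φ (f.coeff 0) = -(r₁ * r₂ * r₃) := by
    rw [hcoeff 0]
    simp only [coeff_add, coeff_C_mul, coeff_X_pow, coeff_C, coeff_X]
    norm_num
  -- v(2) = 0 and friends
  have hv2 : v (2 : Ω) = 0 := v_two_zero' p hp2 K Ω v hv_mul hv_add hv_int
  have hone := v_one' v hv_mul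
  have h2Ω : (2 : Ω) ≠ 0 := two_ne_zero
  have h4Ω : (4 : Ω) ≠ 0 := by norm_num
  have hv4 : v (4 : Ω) = 0 := by
    have h : (4 : Ω) = 2 * 2 := by norm_num
    rw [h, hv_mul 2 2 h2Ω h2Ω, hv2]; norm_num
  have hv16 : v (16 : Ω) = 0 := by
    have h : (16 : Ω) = 4 * 4 := by norm_num
    rw [h, hv_mul 4 4 h4Ω h4Ω, hv4]; norm_num
  -- part (i)
  have part1 : ∀ u s : K, u ≠ 0 →
      (Equid v r₁ r₂ r₃ ↔
        Equid v (φ u ^ 2 * r₁ + φ s) (φ u ^ 2 * r₂ + φ s) (φ u ^ 2 * r₃ + φ s)) := by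
    intro u s hu
    have hU : φ u ≠ 0 := (map_ne_zero_iff φ φ.injective).2 hu
    have hU2 : (φ u) ^ 2 ≠ 0 := pow_ne_zero 2 hU
    have key : ∀ a b : Ω, a - b ≠ 0 →
        v (φ u ^ 2 * a + φ s - (φ u ^ 2 * b + φ s)) = v ((φ u) ^ 2) + v (a - b) := by
      intro a b hab
      have he : φ u ^ 2 * a + φ s - (φ u ^ 2 * b + φ s) = (φ u) ^ 2 * (a - b) := by ring
      rw [he, hv_mul _ _ hU2 hab]
    constructor
    · rintro ⟨h1, h2⟩
      exact ⟨by rw [key _ _ hd12, key _ _ hd13, h1], by rw [key _ _ hd13, key _ _ hd23, h2]⟩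
    · rintro ⟨h1, h2⟩
      rw [key _ _ hd12, key _ _ hd13] at h1
      rw [key _ _ hd13, key _ _ hd23] at h2
      exact ⟨by linarith, by linarith⟩
  -- the base-changed curve over Ω
  have hWlit : EW.baseChange Ω = (WeierstrassCurve.mk 0 (-(r₁ + r₂ + r₃)) 0
      (r₁ * r₂ + r₁ * r₃ + r₂ * r₃) (-(r₁ * r₂ * r₃)) : WeierstrassCurve Ω) := by
    rw [hEW]
    show WeierstrassCurve.map _ φ = _
    simp only [WeierstrassCurve.map, map_zero, hc2, hc1, hc0]
  have hΔWlit : (EW.baseChange Ω).Δ = 16 * ((r₁ - r₂) * ((r₁ - r₃) * (r₂ - r₃))) ^ 2 := by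
    rw [hWlit]
    simp only [WeierstrassCurve.Δ, WeierstrassCurve.b₂, WeierstrassCurve.b₄,
      WeierstrassCurve.b₆, WeierstrassCurve.b₈]
    ring
  have hΔne : (EW.baseChange Ω).Δ ≠ 0 := by
    rw [hΔWlit]
    apply mul_ne_zero (by norm_num)
    exact pow_ne_zero 2 (mul_ne_zero hd12 (mul_ne_zero hd13 hd23))
  have hvΔW : v (EW.baseChange Ω).Δ = 2 * (v (r₁ - r₂) + v (r₁ - r₃) + v (r₂ - r₃)) := by
    rw [hΔWlit, hv_mul 16 _ (by norm_num)
      (pow_ne_zero 2 (mul_ne_zero hd12 (mul_ne_zero hd13 hd23))), hv16,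
      v_pow' v hv_mul _ (mul_ne_zero hd12 (mul_ne_zero hd13 hd23)) 2,
      hv_mul _ _ hd12 (mul_ne_zero hd13 hd23), hv_mul _ _ hd13 hd23]
    push_cast; ring
  -- transfer of coefficients from an intermediate field to Ω
  have hMW : ∀ M : IntermediateField K Ω,
      (EW.baseChange ↥M).map (algebraMap ↥M Ω) = EW.baseChange Ω := fun M =>
    EW.map_baseChange (IsScalarTower.toAlgHom K ↥M Ω)
  have hWeq : ∀ (M : IntermediateField K Ω) (Cv : WeierstrassCurve.VariableChange ↥M),
      (Cv • (EW.baseChange ↥M)).map (algebraMap ↥M Ω)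
        = (Cv.map (algebraMap ↥M Ω)) • (EW.baseChange Ω) := by
    intro M Cv
    rw [← WeierstrassCurve.map_variableChange, hMW M]
  refine ⟨part1, ?_, ?_⟩
  · -- potentially good reduction → equidistant
    rintro ⟨M, hfin, Cv, ⟨h1, h2, h3, h4, h6⟩, hΔ⟩
    set ψ : ↥M →+* Ω := algebraMap ↥M Ω with hψ
    set C : WeierstrassCurve.VariableChange Ω := Cv.map ψ with hC
    have key := hWeq M Cv
    have e1 : ((Cv • (EW.baseChange ↥M)).a₁ : Ω)
        = (C • (EW.baseChange Ω)).a₁ := by rw [← key]; rfl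
    have e2 : ((Cv • (EW.baseChange ↥M)).a₂ : Ω)
        = (C • (EW.baseChange Ω)).a₂ := by rw [← key]; rfl
    have e3 : ((Cv • (EW.baseChange ↥M)).a₃ : Ω)
        = (C • (EW.baseChange Ω)).a₃ := by rw [← key]; rfl
    have e4 : ((Cv • (EW.baseChange ↥M)).a₄ : Ω)
        = (C • (EW.baseChange Ω)).a₄ := by rw [← key]; rfl
    have e6 : ((Cv • (EW.baseChange ↥M)).a₆ : Ω)
        = (C • (EW.baseChange Ω)).a₆ := by rw [← key]; rfl
    have eD : ((Cv • (EW.baseChange ↥M)).Δ : Ω)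
        = (C • (EW.baseChange Ω)).Δ := by
      rw [← key, WeierstrassCurve.map_Δ]; rfl
    rw [e1] at h1; rw [e2] at h2; rw [e3] at h3; rw [e4] at h4; rw [e6] at h6
    rw [eD] at hΔ
    clear e1 e2 e3 e4 e6 eD key
    set U : Ω := (C.u : Ω) with hUdef
    have hU : U ≠ 0 := C.u.ne_zero
    have hUi : ((C.u⁻¹ : Ωˣ) : Ω) = U⁻¹ := by rw [Units.val_inv_eq_inv_val]
    -- explicit coefficients
    have hA1 : (C • (EW.baseChange Ω)).a₁ = U⁻¹ * (2 * C.s) := by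
      rw [WeierstrassCurve.variableChange_a₁, hWlit, hUi]
      norm_num
    have hA2 : (C • (EW.baseChange Ω)).a₂
        = U⁻¹ ^ 2 * (-(r₁ + r₂ + r₃) + 3 * C.r - C.s ^ 2) := by
      rw [WeierstrassCurve.variableChange_a₂, hWlit, hUi]
      norm_num
    have hA3 : (C • (EW.baseChange Ω)).a₃ = U⁻¹ ^ 3 * (2 * C.t) := by
      rw [WeierstrassCurve.variableChange_a₃, hWlit, hUi]
      norm_num
    have hA4 : (C • (EW.baseChange Ω)).a₄
        = U⁻¹ ^ 4 * ((r₁ * r₂ + r₁ * r₃ + r₂ * r₃) + 2 * C.r * (-(r₁ + r₂ + r₃))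
          + 3 * C.r ^ 2 - 2 * C.s * C.t) := by
      rw [WeierstrassCurve.variableChange_a₄, hWlit, hUi]
      norm_num
    have hA6 : (C • (EW.baseChange Ω)).a₆
        = U⁻¹ ^ 6 * (-(r₁ * r₂ * r₃) + C.r * (r₁ * r₂ + r₁ * r₃ + r₂ * r₃)
          + C.r ^ 2 * (-(r₁ + r₂ + r₃)) + C.r ^ 3 - C.t ^ 2) := by
      rw [WeierstrassCurve.variableChange_a₆, hWlit, hUi]
      norm_num
    set A1 := (C • (EW.baseChange Ω)).a₁
    set A2 := (C • (EW.baseChange Ω)).a₂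
    set A3 := (C • (EW.baseChange Ω)).a₃
    set A4 := (C • (EW.baseChange Ω)).a₄
    set A6 := (C • (EW.baseChange Ω)).a₆
    set B2 : Ω := A2 + A1 ^ 2 / 4 with hB2
    set B4 : Ω := A4 + A1 * A3 / 2 with hB4
    set B6 : Ω := A6 + A3 ^ 2 / 4 with hB6
    have hPB2 : B2 ≠ 0 → 0 ≤ v B2 := by
      rw [hB2]
      apply v_addP' v hv_mul hv_add 0 A2 (A1 ^ 2 / 4) (fun _ => h2)
      intro hne
      have hA1ne : A1 ≠ 0 := by
        intro h; apply hne; rw [h]; simp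
      rw [div_eq_mul_inv, hv_mul _ _ (pow_ne_zero 2 hA1ne) (inv_ne_zero h4Ω),
        v_pow' v hv_mul _ hA1ne 2, v_inv' v hv_mul _ h4Ω, hv4]
      push_cast
      linarith [h1]
    have hPB4 : B4 ≠ 0 → 0 ≤ v B4 := by
      rw [hB4]
      apply v_addP' v hv_mul hv_add 0 A4 (A1 * A3 / 2) (fun _ => h4)
      intro hne
      have hA1ne : A1 ≠ 0 := by
        intro h; apply hne; rw [h]; simp
      have hA3ne : A3 ≠ 0 := by
        intro h; apply hne; rw [h]; simp
      rw [div_eq_mul_inv, hv_mul _ _ (mul_ne_zero hA1ne hA3ne) (inv_ne_zero h2Ω),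
        hv_mul _ _ hA1ne hA3ne, v_inv' v hv_mul _ h2Ω, hv2]
      linarith [h1, h3]
    have hPB6 : B6 ≠ 0 → 0 ≤ v B6 := by
      rw [hB6]
      apply v_addP' v hv_mul hv_add 0 A6 (A3 ^ 2 / 4) (fun _ => h6)
      intro hne
      have hA3ne : A3 ≠ 0 := by
        intro h; apply hne; rw [h]; simp
      rw [div_eq_mul_inv, hv_mul _ _ (pow_ne_zero 2 hA3ne) (inv_ne_zero h4Ω),
        v_pow' v hv_mul _ hA3ne 2, v_inv' v hv_mul _ h4Ω, hv4]
      push_cast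
      linarith [h3]
    -- the cubic identity
    have hkey : ∀ ρ : Ω, ((ρ - C.r) * (U ^ 2)⁻¹) ^ 3 + B2 * ((ρ - C.r) * (U ^ 2)⁻¹) ^ 2
        + B4 * ((ρ - C.r) * (U ^ 2)⁻¹) + B6
        = (U⁻¹) ^ 6 * ((ρ - r₁) * ((ρ - r₂) * (ρ - r₃))) := by
      intro ρ
      rw [hB2, hB4, hB6, hA1, hA2, hA3, hA4, hA6, ← inv_pow]
      ring
    have hroot : ∀ ρ : Ω, (ρ - r₁) * ((ρ - r₂) * (ρ - r₃)) = 0 →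
        ((ρ - C.r) * (U ^ 2)⁻¹) ≠ 0 → 0 ≤ v ((ρ - C.r) * (U ^ 2)⁻¹) := by
      intro ρ hρ hne
      refine v_root_cubic' v hv_mul hv_add B2 B4 B6 _ hPB2 hPB4 hPB6 hne ?_
      rw [hkey ρ, hρ, mul_zero]
    set s1 : Ω := (r₁ - C.r) * (U ^ 2)⁻¹ with hs1
    set s2 : Ω := (r₂ - C.r) * (U ^ 2)⁻¹ with hs2
    set s3 : Ω := (r₃ - C.r) * (U ^ 2)⁻¹ with hs3
    have hr1 : s1 ≠ 0 → 0 ≤ v s1 := hroot r₁ (by simp)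
    have hr2 : s2 ≠ 0 → 0 ≤ v s2 := hroot r₂ (by simp)
    have hr3 : s3 ≠ 0 → 0 ≤ v s3 := hroot r₃ (by simp)
    have hU2 : (U ^ 2) ≠ 0 := pow_ne_zero 2 hU
    have hge : ∀ x y : Ω, (x ≠ 0 → 0 ≤ v x) → (y ≠ 0 → 0 ≤ v y) → x - y ≠ 0 →
        0 ≤ v (x - y) := by
      intro x y hx hy hne
      have hy' : -y ≠ 0 → (0:ℚ) ≤ v (-y) := by
        intro h
        rw [v_neg' v hv_mul y (neg_ne_zero.1 h)]
        exact hy (neg_ne_zero.1 h)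
      have := v_addP' v hv_mul hv_add 0 x (-y) hx hy' (by rwa [← sub_eq_add_neg])
      rwa [← sub_eq_add_neg] at this
    have e12 : s1 - s2 = (r₁ - r₂) * (U ^ 2)⁻¹ := by rw [hs1, hs2]; ring
    have e13 : s1 - s3 = (r₁ - r₃) * (U ^ 2)⁻¹ := by rw [hs1, hs3]; ring
    have e23 : s2 - s3 = (r₂ - r₃) * (U ^ 2)⁻¹ := by rw [hs2, hs3]; ring
    have hne12' : s1 - s2 ≠ 0 := by rw [e12]; exact mul_ne_zero hd12 (inv_ne_zero hU2)
    have hne13' : s1 - s3 ≠ 0 := by rw [e13]; exact mul_ne_zero hd13 (inv_ne_zero hU2)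
    have hne23' : s2 - s3 ≠ 0 := by rw [e23]; exact mul_ne_zero hd23 (inv_ne_zero hU2)
    have hvd : ∀ a b : Ω, a - b ≠ 0 → v ((a - b) * (U ^ 2)⁻¹) = v (a - b) - 2 * v U := by
      intro a b hab
      rw [hv_mul _ _ hab (inv_ne_zero hU2), v_inv' v hv_mul _ hU2, v_pow' v hv_mul U hU 2]
      push_cast; ring
    have hn12 : 0 ≤ v (r₁ - r₂) - 2 * v U := by
      have h := hge s1 s2 hr1 hr2 hne12'
      rw [e12, hvd r₁ r₂ hd12] at h
      exact h
    have hn13 : 0 ≤ v (r₁ - r₃) - 2 * v U := by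
      have h := hge s1 s3 hr1 hr3 hne13'
      rw [e13, hvd r₁ r₃ hd13] at h
      exact h
    have hn23 : 0 ≤ v (r₂ - r₃) - 2 * v U := by
      have h := hge s2 s3 hr2 hr3 hne23'
      rw [e23, hvd r₂ r₃ hd23] at h
      exact h
    have hΔ' : v ((C • (EW.baseChange Ω)).Δ)
        = -(12 * v U) + v (EW.baseChange Ω).Δ := by
      rw [WeierstrassCurve.variableChange_Δ, hUi,
        hv_mul _ _ (pow_ne_zero 12 (inv_ne_zero hU)) hΔne,
        v_pow' v hv_mul _ (inv_ne_zero hU) 12, v_inv' v hv_mul U hU]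
      push_cast; ring
    rw [hΔ', hvΔW] at hΔ
    exact ⟨by linarith, by linarith⟩
  · -- equidistant → potentially good reduction
    intro hEq
    obtain ⟨heq1, heq2⟩ := hEq
    obtain ⟨π, hπ0, hπ1⟩ := hv_one
    have hPi : φ π ≠ 0 := (map_ne_zero_iff φ φ.injective).2 hπ0
    obtain ⟨u, hu2⟩ := IsAlgClosed.exists_pow_nat_eq (r₁ - r₂) (n := 2) (by norm_num)
    have hu0 : u ≠ 0 := by
      intro h
      rw [h, zero_pow (by norm_num : (2:ℕ) ≠ 0)] at hu2
      exact hd12 hu2.symm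
    set vu : ℚ := v u with hvu
    have hw12 : v (r₁ - r₂) = 2 * vu := by
      rw [← hu2, v_pow' v hv_mul u hu0 2]; push_cast; ring
    have hw13 : v (r₁ - r₃) = 2 * vu := by rw [← heq1, hw12]
    have hw23 : v (r₂ - r₃) = 2 * vu := by rw [← heq2, ← heq1, hw12]
    set δ : Ω := φ π * u ^ 2 with hδ
    have hδ0 : δ ≠ 0 := mul_ne_zero hPi (pow_ne_zero 2 hu0)
    have hvδ : v δ = 1 + 2 * vu := by
      rw [hδ, hv_mul _ _ hPi (pow_ne_zero 2 hu0), hπ1, v_pow' v hv_mul u hu0 2]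
      push_cast; ring
    set R : Ω := r₁ + δ with hR
    -- dominance facts
    have h12 := v_add_eq_left' v hv_mul hv_add (r₁ - r₂) δ hd12 hδ0
      (by rw [hw12, hvδ]; linarith)
    have h13 := v_add_eq_left' v hv_mul hv_add (r₁ - r₃) δ hd13 hδ0
      (by rw [hw13, hvδ]; linarith)
    -- E₆
    set E6 : Ω := δ * ((r₁ - r₂ + δ) * (r₁ - r₃ + δ)) with hE6def
    have hE6ne : E6 ≠ 0 := mul_ne_zero hδ0 (mul_ne_zero h12.1 h13.1)
    have hvE6 : v E6 = 1 + 6 * vu := by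
      rw [hE6def, hv_mul _ _ hδ0 (mul_ne_zero h12.1 h13.1), hv_mul _ _ h12.1 h13.1,
        hvδ, h12.2, h13.2, hw12, hw13]
      ring
    -- E₄
    set T1 : Ω := (r₁ - r₂ + δ) * (r₁ - r₃ + δ) with hT1def
    set T2 : Ω := δ * ((r₁ - r₃ + δ) + (r₁ - r₂ + δ)) with hT2def
    have hT1ne : T1 ≠ 0 := mul_ne_zero h12.1 h13.1
    have hvT1 : v T1 = 4 * vu := by
      rw [hT1def, hv_mul _ _ h12.1 h13.1, h12.2, h13.2, hw12, hw13]; ring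
    have hE4 : T1 + T2 ≠ 0 ∧ v (T1 + T2) = 4 * vu := by
      by_cases hT2 : T2 = 0
      · rw [hT2, add_zero]
        exact ⟨hT1ne, hvT1⟩
      · have hsumne : (r₁ - r₃ + δ) + (r₁ - r₂ + δ) ≠ 0 := by
          intro h
          rw [hT2def, h, mul_zero] at hT2
          exact hT2 rfl
        have hvsum : 2 * vu ≤ v ((r₁ - r₃ + δ) + (r₁ - r₂ + δ)) := by
          have := hv_add _ _ h13.1 h12.1 hsumne
          rw [h12.2, h13.2, hw12, hw13] at this
          simpa using this
        have hvT2 : 4 * vu < v T2 := by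
          rw [hT2def, hv_mul _ _ hδ0 hsumne, hvδ]
          linarith
        have := v_add_eq_left' v hv_mul hv_add T1 T2 hT1ne hT2 (by rw [hvT1]; linarith)
        rw [hvT1] at this
        exact this
    -- E₂
    set E2 : Ω := (r₁ - r₂) + (r₁ - r₃) + 3 * δ with hE2def
    have hv3 : 0 ≤ v (3 : Ω) := by
      have h3 : (3 : Ω) = 2 + 1 := by norm_num
      rw [h3]
      refine v_addP' v hv_mul hv_add 0 2 1 (fun _ => le_of_eq hv2.symm)
        (fun _ => le_of_eq hone.symm) (by rw [← h3]; norm_num)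
    have h3Ω : (3 : Ω) ≠ 0 := by norm_num
    have hPE2 : E2 ≠ 0 → 2 * vu ≤ v E2 := by
      rw [hE2def]
      refine v_addP' v hv_mul hv_add (2 * vu) _ _ ?_ ?_
      · refine v_addP' v hv_mul hv_add (2 * vu) _ _
          (fun _ => le_of_eq hw12.symm) (fun _ => le_of_eq hw13.symm)
      · intro h
        rw [hv_mul _ _ h3Ω hδ0, hvδ]
        linarith
    -- choose the exponents
    obtain ⟨Mn, hMn⟩ := exists_nat_gt (max vu (if E2 = 0 then 0 else v E2 / 2))
    obtain ⟨Ln, hLn⟩ := exists_nat_gt (max (max (3 * vu) (4 * vu)) ((1 + 6 * vu) / 2))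
    have hMnvu : vu < (Mn : ℚ) := lt_of_le_of_lt (le_max_left _ _) hMn
    have hLn3 : 3 * vu < (Ln : ℚ) := lt_of_le_of_lt (le_trans (le_max_left _ _) (le_max_left _ _)) hLn
    have hLn4 : 4 * vu < (Ln : ℚ) := lt_of_le_of_lt (le_trans (le_max_right _ _) (le_max_left _ _)) hLn
    have hLn6 : (1 + 6 * vu) / 2 < (Ln : ℚ) := lt_of_le_of_lt (le_max_right _ _) hLn
    set S : Ω := (φ π) ^ Mn with hSdef
    set T : Ω := (φ π) ^ Ln with hTdef
    have hSne : S ≠ 0 := pow_ne_zero _ hPi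
    have hTne : T ≠ 0 := pow_ne_zero _ hPi
    have hvS : v S = Mn := by rw [hSdef, v_pow' v hv_mul _ hPi, hπ1, mul_one]
    have hvT : v T = Ln := by rw [hTdef, v_pow' v hv_mul _ hPi, hπ1, mul_one]
    -- the finite extension
    set Sset : Set Ω := {r₁, r₂, r₃, u} with hSset
    haveI : Finite ↥Sset := by
      rw [hSset]
      exact ((((Set.finite_singleton u).insert r₃).insert r₂).insert r₁).to_subtype
    set Mf : IntermediateField K Ω := IntermediateField.adjoin K Sset with hMf
    have hfin : FiniteDimensional K ↥Mf :=
      IntermediateField.finiteDimensional_adjoin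
        (fun x _ => (Algebra.IsAlgebraic.isAlgebraic (R := K) x).isIntegral)
    have hmr1 : r₁ ∈ Mf := IntermediateField.subset_adjoin K Sset (by simp [hSset])
    have hmr2 : r₂ ∈ Mf := IntermediateField.subset_adjoin K Sset (by simp [hSset])
    have hmr3 : r₃ ∈ Mf := IntermediateField.subset_adjoin K Sset (by simp [hSset])
    have hmu : u ∈ Mf := IntermediateField.subset_adjoin K Sset (by simp [hSset])
    have hmR : R ∈ Mf := by
      rw [hR, hδ]
      exact add_mem hmr1 (mul_mem (Mf.algebraMap_mem π) (pow_mem hmu 2))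
    have huMne : (⟨u, hmu⟩ : ↥Mf) ≠ 0 := by
      intro h
      exact hu0 (by simpa using congrArg (fun z : ↥Mf => (z : Ω)) h)
    set Cv : WeierstrassCurve.VariableChange ↥Mf :=
      ⟨Units.mk0 ⟨u, hmu⟩ huMne, ⟨R, hmR⟩, algebraMap K ↥Mf (π ^ Mn),
        algebraMap K ↥Mf (π ^ Ln)⟩ with hCv
    set ψ : ↥Mf →+* Ω := algebraMap ↥Mf Ω with hψ
    set C : WeierstrassCurve.VariableChange Ω := Cv.map ψ with hC
    have key := hWeq Mf Cv
    have e1 : ((Cv • (EW.baseChange ↥Mf)).a₁ : Ω)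
        = (C • (EW.baseChange Ω)).a₁ := by rw [← key]; rfl
    have e2 : ((Cv • (EW.baseChange ↥Mf)).a₂ : Ω)
        = (C • (EW.baseChange Ω)).a₂ := by rw [← key]; rfl
    have e3 : ((Cv • (EW.baseChange ↥Mf)).a₃ : Ω)
        = (C • (EW.baseChange Ω)).a₃ := by rw [← key]; rfl
    have e4 : ((Cv • (EW.baseChange ↥Mf)).a₄ : Ω)
        = (C • (EW.baseChange Ω)).a₄ := by rw [← key]; rfl
    have e6 : ((Cv • (EW.baseChange ↥Mf)).a₆ : Ω)
        = (C • (EW.baseChange Ω)).a₆ := by rw [← key]; rfl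
    have eD : ((Cv • (EW.baseChange ↥Mf)).Δ : Ω)
        = (C • (EW.baseChange Ω)).Δ := by
      rw [← key, WeierstrassCurve.map_Δ]; rfl
    -- components of C
    have hCu : ((C.u : Ωˣ) : Ω) = u := by
      rw [hC, hCv]
      simp only [WeierstrassCurve.VariableChange.map, Units.coe_map, MonoidHom.coe_coe]
      exact IntermediateField.algebraMap_apply Mf ⟨u, hmu⟩
    have hCuinv : ((C.u⁻¹ : Ωˣ) : Ω) = u⁻¹ := by
      rw [Units.val_inv_eq_inv_val, hCu]
    have hCr : C.r = R := by rw [hC, hCv]; rfl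
    have hCs : C.s = S := by
      rw [hC, hCv, hSdef]
      show ψ (algebraMap K ↥Mf (π ^ Mn)) = (φ π) ^ Mn
      rw [← IsScalarTower.algebraMap_apply, hφ, map_pow]
    have hCt : C.t = T := by
      rw [hC, hCv, hTdef]
      show ψ (algebraMap K ↥Mf (π ^ Ln)) = (φ π) ^ Ln
      rw [← IsScalarTower.algebraMap_apply, hφ, map_pow]
    -- explicit coefficients
    have hA1 : (C • (EW.baseChange Ω)).a₁ = u⁻¹ * (2 * S) := by
      rw [WeierstrassCurve.variableChange_a₁, hWlit, hCuinv, hCs]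
      norm_num
    have hA2 : (C • (EW.baseChange Ω)).a₂ = u⁻¹ ^ 2 * (E2 - S ^ 2) := by
      rw [WeierstrassCurve.variableChange_a₂, hWlit, hCuinv, hCs, hCr, hE2def, hR, hδ]
      show u⁻¹ ^ 2 * (-(r₁ + r₂ + r₃) - S * 0 + 3 * (r₁ + φ π * u ^ 2) - S ^ 2) = _
      ring
    have hA3 : (C • (EW.baseChange Ω)).a₃ = u⁻¹ ^ 3 * (2 * T) := by
      rw [WeierstrassCurve.variableChange_a₃, hWlit, hCuinv, hCr, hCt]
      show u⁻¹ ^ 3 * (0 + R * 0 + 2 * T) = _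
      ring
    have hA4 : (C • (EW.baseChange Ω)).a₄
        = u⁻¹ ^ 4 * ((T1 + T2) - 2 * S * T) := by
      rw [WeierstrassCurve.variableChange_a₄, hWlit, hCuinv, hCs, hCr, hCt,
        hT1def, hT2def, hR, hδ]
      show u⁻¹ ^ 4 * ((r₁ * r₂ + r₁ * r₃ + r₂ * r₃) - S * 0
        + 2 * (r₁ + φ π * u ^ 2) * -(r₁ + r₂ + r₃) - (T + (r₁ + φ π * u ^ 2) * S) * 0
        + 3 * (r₁ + φ π * u ^ 2) ^ 2 - 2 * S * T) = _
      ring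
    have hA6 : (C • (EW.baseChange Ω)).a₆ = u⁻¹ ^ 6 * (E6 - T ^ 2) := by
      rw [WeierstrassCurve.variableChange_a₆, hWlit, hCuinv, hCr, hCt,
        hE6def, hR, hδ]
      show u⁻¹ ^ 6 * (-(r₁ * r₂ * r₃) + (r₁ + φ π * u ^ 2) * (r₁ * r₂ + r₁ * r₃ + r₂ * r₃)
        + (r₁ + φ π * u ^ 2) ^ 2 * -(r₁ + r₂ + r₃) + (r₁ + φ π * u ^ 2) ^ 3 - T * 0
        - T ^ 2 - (r₁ + φ π * u ^ 2) * T * 0) = _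
      ring
    have hui : u⁻¹ ≠ 0 := inv_ne_zero hu0
    have hvui : v u⁻¹ = -vu := v_inv' v hv_mul u hu0
    refine ⟨Mf, hfin, Cv, ⟨?_, ?_, ?_, ?_, ?_⟩, ?_⟩
    · -- a₁
      rw [e1, hA1, hv_mul _ _ hui (mul_ne_zero h2Ω hSne), hvui,
        hv_mul _ _ h2Ω hSne, hv2, hvS]
      linarith
    · -- a₂
      rw [e2, hA2]
      by_cases hE2 : E2 = 0
      · rw [hE2, zero_sub, hv_mul _ _ (pow_ne_zero 2 hui) (neg_ne_zero.2 (pow_ne_zero 2 hSne)),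
          v_pow' v hv_mul _ hui 2, v_neg' v hv_mul _ (pow_ne_zero 2 hSne),
          v_pow' v hv_mul _ hSne 2, hvui, hvS]
        push_cast
        linarith
      · have hvE2le : v E2 < 2 * Mn := by
          have := lt_of_le_of_lt (le_max_right _ _) hMn
          rw [if_neg hE2] at this
          linarith
        have hdom := v_add_eq_left' v hv_mul hv_add E2 (-(S ^ 2)) hE2
          (neg_ne_zero.2 (pow_ne_zero 2 hSne))
          (by rw [v_neg' v hv_mul _ (pow_ne_zero 2 hSne), v_pow' v hv_mul _ hSne 2, hvS]
              push_cast; linarith)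
        have hsub : E2 - S ^ 2 = E2 + -(S ^ 2) := by ring
        rw [hsub, hv_mul _ _ (pow_ne_zero 2 hui) hdom.1, v_pow' v hv_mul _ hui 2,
          hvui, hdom.2]
        have := hPE2 hE2
        push_cast
        linarith
    · -- a₃
      rw [e3, hA3, hv_mul _ _ (pow_ne_zero 3 hui) (mul_ne_zero h2Ω hTne),
        v_pow' v hv_mul _ hui 3, hvui, hv_mul _ _ h2Ω hTne, hv2, hvT]
      push_cast
      linarith
    · -- a₄
      rw [e4, hA4]
      have h2ST : 2 * S * T ≠ 0 := mul_ne_zero (mul_ne_zero h2Ω hSne) hTne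
      have hv2ST : v (2 * S * T) = Mn + Ln := by
        rw [hv_mul _ _ (mul_ne_zero h2Ω hSne) hTne, hv_mul _ _ h2Ω hSne, hv2, hvS, hvT]
        ring
      have hdom := v_add_eq_left' v hv_mul hv_add (T1 + T2) (-(2 * S * T)) hE4.1
        (neg_ne_zero.2 h2ST)
        (by rw [v_neg' v hv_mul _ h2ST, hv2ST, hE4.2]
            have : (0:ℚ) ≤ Mn := Nat.cast_nonneg Mn
            linarith)
      have hsub : (T1 + T2) - 2 * S * T = (T1 + T2) + -(2 * S * T) := by ring
      rw [hsub, hv_mul _ _ (pow_ne_zero 4 hui) hdom.1, v_pow' v hv_mul _ hui 4,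
        hvui, hdom.2, hE4.2]
      push_cast
      linarith
    · -- a₆
      rw [e6, hA6]
      have hT2ne : T ^ 2 ≠ 0 := pow_ne_zero 2 hTne
      have hdom := v_add_eq_left' v hv_mul hv_add E6 (-(T ^ 2)) hE6ne
        (neg_ne_zero.2 hT2ne)
        (by rw [v_neg' v hv_mul _ hT2ne, v_pow' v hv_mul _ hTne 2, hvT, hvE6]
            push_cast; linarith)
      have hsub : E6 - T ^ 2 = E6 + -(T ^ 2) := by ring
      rw [hsub, hv_mul _ _ (pow_ne_zero 6 hui) hdom.1, v_pow' v hv_mul _ hui 6,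
        hvui, hdom.2, hvE6]
      push_cast
      linarith
    · -- Δ
      rw [eD, WeierstrassCurve.variableChange_Δ, hCuinv,
        hv_mul _ _ (pow_ne_zero 12 hui) hΔne, v_pow' v hv_mul _ hui 12, hvui, hvΔW,
        hw12, hw13, hw23]
      push_cast
      ring
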